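/- Let N ≥ 1, 0 ≤ r ≤ N, let t ∈ ℂ satisfy t^i ≠ 1 for all 1 ≤ i ≤ r, and let z_1,…,z_N ∈ ℂ be pairwise distinct. Then Σ_{J ⊆ {1,…,N}, #J = r} ∏_{j∈J} ∏_{k∉J} (t·z_j − z_k)/(z_j − z_k) = ∏_{i=1}^{r} (t^{N−r+i} − 1)/(t^i − 1); in particular the left-hand side is independent of z_1,…,z_N and equals the Gaussian binomial coefficient. -/

import Mathlib

open scoped BigOperators
open Polynomial Finset

namespace Stmt19

noncomputable def Gq (t : ℂ) (n r : ℕ) : ℂ :=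
  ∏ i ∈ Finset.Icc 1 r, (t ^ (n - r + i) - 1) / (t ^ i - 1)

lemma gq_zero (t : ℂ) (n : ℕ) : Gq t n 0 = 1 := by simp [Gq]

lemma gq_eq (t : ℂ) {n r : ℕ} (h : r ≤ n) :
    Gq t n r = (∏ i ∈ Finset.Icc (n - r + 1) n, (t ^ i - 1)) /
      ∏ i ∈ Finset.Icc 1 r, (t ^ i - 1) := by
  rw [Gq, Finset.prod_div_distrib]
  congr 1
  refine Finset.prod_nbij (fun i => n - r + i) (fun i hi => ?_) (fun i hi j hj hij => ?_)
    (fun i hi => ?_) (fun i hi => rfl)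
  · simp only [Finset.mem_Icc] at *; omega
  · simp only [Finset.mem_Icc] at *; omega
  · simp only [Finset.mem_Icc, Set.mem_image, Finset.mem_coe] at *
    exact ⟨i - (n - r), by omega⟩

lemma gq_succ_top (t : ℂ) {n r : ℕ} (h1 : 1 ≤ r) (h2 : r ≤ n + 1) :
    Gq t (n + 1) r = (t ^ (n + 1) - 1) / (t ^ r - 1) * Gq t n (r - 1) := by
  obtain ⟨m, rfl⟩ : ∃ m, r = m + 1 := ⟨r - 1, by omega⟩
  simp only [Nat.add_sub_cancel]
  rw [gq_eq t h2, gq_eq t (show m ≤ n by omega)]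
  have e1 : Finset.Icc (n + 1 - (m+1) + 1) (n + 1) = Finset.Icc (n - m + 1) (n + 1) := by
    congr 1; omega
  have e2 : (∏ i ∈ Finset.Icc (n - m + 1) (n + 1), (t ^ i - 1)) =
      (∏ i ∈ Finset.Icc (n - m + 1) n, (t ^ i - 1)) * (t ^ (n+1) - 1) := by
    rw [← Finset.prod_Icc_succ_top (by omega)]
  have e3 : (∏ i ∈ Finset.Icc 1 (m+1), (t ^ i - 1)) =
      (∏ i ∈ Finset.Icc 1 m, (t ^ i - 1)) * (t ^ (m+1) - 1) := by
    rw [← Finset.prod_Icc_succ_top (by omega : 1 ≤ m + 1)]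
  rw [e1, e2, e3]
  rw [div_mul_div_comm]
  ring

lemma gq_succ_bot (t : ℂ) {n r : ℕ} (h1 : 1 ≤ r) (h2 : r ≤ n) :
    Gq t n r = (t ^ (n + 1 - r) - 1) / (t ^ r - 1) * Gq t n (r - 1) := by
  obtain ⟨m, rfl⟩ : ∃ m, r = m + 1 := ⟨r - 1, by omega⟩
  simp only [Nat.add_sub_cancel]
  rw [gq_eq t h2, gq_eq t (show m ≤ n by omega)]
  have e1 : (∏ i ∈ Finset.Icc (n - (m+1) + 1) n, (t ^ i - 1)) =
      (t ^ (n + 1 - (m+1)) - 1) * ∏ i ∈ Finset.Icc (n - m + 1) n, (t ^ i - 1) := by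
    have h0 : Finset.Icc (n - (m+1) + 1) n = Finset.Ico (n - (m+1) + 1) (n + 1) := by
      rw [Finset.Ico_add_one_right_eq_Icc]
    rw [h0, Finset.prod_eq_prod_Ico_succ_bot (by omega)]
    have h1 : Finset.Ico (n - (m+1) + 1 + 1) (n + 1) = Finset.Icc (n - m + 1) n := by
      rw [Finset.Ico_add_one_right_eq_Icc]; congr 1; omega
    rw [h1, show n - (m+1) + 1 = n + 1 - (m+1) from by omega]
  have e3 : (∏ i ∈ Finset.Icc 1 (m+1), (t ^ i - 1)) =
      (∏ i ∈ Finset.Icc 1 m, (t ^ i - 1)) * (t ^ (m+1) - 1) := by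
    rw [← Finset.prod_Icc_succ_top (by omega : 1 ≤ m + 1)]
  rw [e1, e3, div_mul_div_comm]
  ring

lemma gq_pascal (t : ℂ) {n r : ℕ} (h1 : 1 ≤ r) (h2 : r ≤ n) (ht : t ^ r ≠ 1) :
    t ^ (n + 1 - r) * Gq t n (r - 1) + Gq t n r = Gq t (n + 1) r := by
  rw [gq_succ_bot t h1 h2, gq_succ_top t h1 (by omega)]
  have h : t ^ r - 1 ≠ 0 := sub_ne_zero.mpr ht
  have hp : t ^ (n + 1 - r) * t ^ r = t ^ (n + 1) := by
    rw [← pow_add]; congr 1; omega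
  field_simp
  linear_combination Gq t n (r-1) * hp

lemma gq_self (t : ℂ) {n : ℕ} (ht : ∀ i, 1 ≤ i → i ≤ n → t ^ i ≠ 1) :
    Gq t n n = 1 := by
  rw [Gq]
  refine Finset.prod_eq_one fun i hi => ?_
  simp only [Finset.mem_Icc] at hi
  rw [Nat.sub_self, Nat.zero_add]
  exact div_self (sub_ne_zero.mpr (ht i hi.1 hi.2))

end Stmt19

namespace Stmt19

variable {ι : Type*} [DecidableEq ι]

lemma natDegree_prod_tlin_le (t : ℂ) (f : ι → ℂ) (s : Finset ι) :
    (∏ k ∈ s, (C t * X - C (f k))).natDegree ≤ s.card := by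
  refine (Polynomial.natDegree_prod_le s _).trans ?_
  rw [Finset.card_eq_sum_ones]
  refine Finset.sum_le_sum fun k _ => ?_
  refine (Polynomial.natDegree_sub_le _ _).trans (max_le ?_ ?_)
  · exact (Polynomial.natDegree_C_mul_le _ _).trans (by simp)
  · simp

lemma coeff_prod_tlin (t : ℂ) (f : ι → ℂ) (s : Finset ι) :
    (∏ k ∈ s, (C t * X - C (f k))).coeff s.card = t ^ s.card := by
  induction s using Finset.induction_on with
  | empty => simp
  | @insert a s ha ih =>
      rw [Finset.prod_insert ha, Finset.card_insert_of_notMem ha]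
      rw [sub_mul, coeff_sub, mul_assoc, coeff_C_mul, coeff_X_mul, ih, coeff_C_mul,
        coeff_eq_zero_of_natDegree_lt ((natDegree_prod_tlin_le t f s).trans_lt (Nat.lt_succ_self _))]
      ring

lemma monic_prod_lin (f : ι → ℂ) (s : Finset ι) : (∏ k ∈ s, (X - C (f k))).Monic :=
  monic_prod_of_monic _ _ fun k _ => monic_X_sub_C _

lemma natDegree_prod_lin (f : ι → ℂ) (s : Finset ι) :
    (∏ k ∈ s, (X - C (f k))).natDegree = s.card := by
  rw [natDegree_prod_of_monic _ _ fun k _ => monic_X_sub_C _]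
  simp

end Stmt19

namespace Stmt19

variable {ι : Type*} [DecidableEq ι]

set_option maxHeartbeats 1000000 in
theorem aux (t : ℂ) (n : ℕ) : ∀ (s : Finset ι) (z : ι → ℂ), s.card = n → Set.InjOn z s →
    ∀ r, r ≤ n → (∀ i, 1 ≤ i → i ≤ r → t ^ i ≠ 1) →
    ∑ J ∈ Finset.powersetCard r s, ∏ j ∈ J, ∏ k ∈ s \ J, (t * z j - z k) / (z j - z k)
      = Gq t n r := by
  induction n with
  | zero =>
      intro s z hcard _ r hr _
      interval_cases r
      simp [Gq]
  | succ n IH =>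
      intro s z hcard hinj r hrn ht
      rcases Nat.eq_zero_or_pos r with rfl | hrpos
      · simp [Gq]
      rcases eq_or_lt_of_le hrn with rfl | hlt
      · -- r = n + 1 = s.card
        have h1 : Gq t (n+1) (n+1) = 1 := gq_self t ht
        rw [h1, ← hcard, Finset.powersetCard_self, Finset.sum_singleton, Finset.sdiff_self]
        simp
      have hrn2 : r ≤ n := by omega
      obtain ⟨r', rfl⟩ : ∃ r', r = r' + 1 := ⟨r - 1, by omega⟩
      have hs_ne : s.Nonempty := by rw [← Finset.card_pos, hcard]; omega
      obtain ⟨a, ha⟩ := hs_ne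
      set s' := s.erase a with hs'def
      have ha' : a ∉ s' := Finset.notMem_erase a s
      have hss : insert a s' = s := Finset.insert_erase ha
      have hcard' : s'.card = n := by
        rw [hs'def, Finset.card_erase_of_mem ha, hcard]
        omega
      have hsub : s' ⊆ s := Finset.erase_subset a s
      have hinj' : Set.InjOn z s' := hinj.mono (by exact_mod_cast hsub)
      set w := z a with hw
      have hwk : ∀ k ∈ s', w - z k ≠ 0 := by
        intro k hk
        refine sub_ne_zero.mpr fun h => ?_
        exact (Finset.mem_erase.mp hk).1 (hinj (by simpa using hsub hk) (by simpa using ha) h.symm)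
      have hkz : ∀ k ∈ s', z k - w ≠ 0 := fun k hk => fun h =>
        hwk k hk (by linear_combination -h)
      set D : Polynomial ℂ := ∏ k ∈ s', (X - C (z k)) with hD
      set TT : Finset ι → ℂ :=
        fun J => ∏ j ∈ J, ∏ k ∈ s' \ J, (t * z j - z k) / (z j - z k) with hTT
      set c1 : Finset ι → Polynomial ℂ := fun J =>
        C (TT J) * ((∏ j ∈ J, (X - C (t * z j))) * ∏ k ∈ s' \ J, (X - C (z k))) with hc1
      set c2 : Finset ι → Polynomial ℂ := fun K =>
        C (TT K) * ((∏ k ∈ s' \ K, (C t * X - C (z k))) * ∏ j ∈ K, (X - C (z j))) with hc2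
      set F : Polynomial ℂ := (∑ J ∈ Finset.powersetCard (r'+1) s', c1 J)
        + ∑ K ∈ Finset.powersetCard r' s', c2 K with hF
      have hsplit : Finset.powersetCard (r'+1) s
          = Finset.powersetCard (r'+1) s' ∪ (Finset.powersetCard r' s').image (insert a) := by
        rw [← hss]; exact Finset.powersetCard_succ_insert ha' r'
      have hdisj : Disjoint (Finset.powersetCard (r'+1) s')
          ((Finset.powersetCard r' s').image (insert a)) := by
        rw [Finset.disjoint_left]
        intro J hJ hJ2
        simp only [Finset.mem_image] at hJ2
        obtain ⟨K, _, rfl⟩ := hJ2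
        exact ha' ((Finset.mem_powersetCard.mp hJ).1 (Finset.mem_insert_self a K))
      have hinsinj : ∀ g : Finset ι → ℂ,
          ∑ J ∈ (Finset.powersetCard r' s').image (insert a), g J
            = ∑ K ∈ Finset.powersetCard r' s', g (insert a K) := by
        intro g
        refine Finset.sum_image ?_
        intro K hK K' hK' h
        have hKa : a ∉ K := fun h' => ha' ((Finset.mem_powersetCard.mp hK).1 h')
        have hKa' : a ∉ K' := fun h' => ha' ((Finset.mem_powersetCard.mp hK').1 h')
        rw [← Finset.erase_insert hKa, ← Finset.erase_insert hKa', h]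
      -- E1
      have E1 : ∀ J ∈ Finset.powersetCard (r'+1) s',
          (∏ j ∈ J, ∏ k ∈ s \ J, (t * z j - z k) / (z j - z k)) * D.eval w
            = (c1 J).eval w := by
        intro J hJ
        obtain ⟨hJs, hJc⟩ := Finset.mem_powersetCard.mp hJ
        have haJ : a ∉ J := fun h => ha' (hJs h)
        have hsdJ : s \ J = insert a (s' \ J) := by
          rw [← hss, Finset.insert_sdiff_of_notMem _ haJ]
        have hans : a ∉ s' \ J := fun h => ha' (Finset.mem_sdiff.mp h).1
        rw [hsdJ]
        simp only [Finset.prod_insert hans]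
        rw [Finset.prod_mul_distrib]
        simp only [hc1, eval_mul, eval_C, eval_prod, eval_sub, eval_X]
        have hDev : D.eval w = (∏ k ∈ s' \ J, (w - z k)) * ∏ j ∈ J, (w - z j) := by
          rw [hD]
          simp only [eval_prod, eval_sub, eval_X, eval_C]
          exact (Finset.prod_sdiff hJs).symm
        rw [hDev]
        have key : (∏ j ∈ J, (t * z j - w) / (z j - w)) * ∏ j ∈ J, (w - z j)
            = ∏ j ∈ J, (w - t * z j) := by
          rw [← Finset.prod_mul_distrib]
          refine Finset.prod_congr rfl fun j hj => ?_
          have h1 : z j - w ≠ 0 := hkz j (hJs hj)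
          field_simp
          ring
        rw [← key, hTT]
        ring
      -- E2
      have E2 : ∀ K ∈ Finset.powersetCard r' s',
          (∏ j ∈ insert a K, ∏ k ∈ s \ insert a K, (t * z j - z k) / (z j - z k)) * D.eval w
            = (c2 K).eval w := by
        intro K hK
        obtain ⟨hKs, hKc⟩ := Finset.mem_powersetCard.mp hK
        have haK : a ∉ K := fun h => ha' (hKs h)
        have hsd : s \ insert a K = s' \ K := by
          ext x
          simp only [Finset.mem_sdiff, Finset.mem_insert, hs'def, Finset.mem_erase]
          tauto
        rw [hsd, Finset.prod_insert haK]
        simp only [hc2, eval_mul, eval_C, eval_prod, eval_sub, eval_X]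
        have hDev : D.eval w = (∏ k ∈ s' \ K, (w - z k)) * ∏ j ∈ K, (w - z j) := by
          rw [hD]
          simp only [eval_prod, eval_sub, eval_X, eval_C]
          exact (Finset.prod_sdiff hKs).symm
        rw [hDev]
        have key : (∏ k ∈ s' \ K, (t * w - z k) / (w - z k)) * ∏ k ∈ s' \ K, (w - z k)
            = ∏ k ∈ s' \ K, (t * w - z k) := by
          rw [← Finset.prod_mul_distrib]
          refine Finset.prod_congr rfl fun k hk => ?_
          have h1 : w - z k ≠ 0 := hwk k (Finset.mem_sdiff.mp hk).1
          field_simp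
        rw [← key, hTT]
        ring
      -- combine into F
      have hS : (∑ J ∈ Finset.powersetCard (r'+1) s,
            ∏ j ∈ J, ∏ k ∈ s \ J, (t * z j - z k) / (z j - z k)) * D.eval w = F.eval w := by
        rw [hsplit, Finset.sum_union hdisj, add_mul, Finset.sum_mul, Finset.sum_mul,
          hinsinj (fun J => (∏ j ∈ J, ∏ k ∈ s \ J, (t * z j - z k) / (z j - z k)) * D.eval w)]
        rw [hF, eval_add, eval_finset_sum, eval_finset_sum]
        congr 1
        · exact Finset.sum_congr rfl E1
        · exact Finset.sum_congr rfl E2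
      -- coefficient facts
      have hc1facts : ∀ J ∈ Finset.powersetCard (r'+1) s',
          (c1 J).natDegree ≤ n ∧ (c1 J).coeff n = TT J := by
        intro J hJ
        obtain ⟨hJs, hJc⟩ := Finset.mem_powersetCard.mp hJ
        have hm1 : (∏ j ∈ J, (X - C (t * z j))).Monic := monic_prod_lin _ _
        have hm2 : (∏ k ∈ s' \ J, (X - C (z k))).Monic := monic_prod_lin _ _
        have hmm := hm1.mul hm2
        have hle : r' + 1 ≤ n := by
          have h := Finset.card_le_card hJs
          rw [hJc, hcard'] at h
          exact h
        have hdeg : ((∏ j ∈ J, (X - C (t * z j))) * ∏ k ∈ s' \ J, (X - C (z k))).natDegree = n := by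
          rw [Monic.natDegree_mul hm1 hm2, natDegree_prod_lin, natDegree_prod_lin, hJc,
            Finset.card_sdiff_of_subset hJs, hcard', hJc]
          omega
        have hco : ((∏ j ∈ J, (X - C (t * z j))) * ∏ k ∈ s' \ J, (X - C (z k))).coeff n = 1 := by
          rw [← hdeg]; exact hmm.coeff_natDegree
        constructor
        · simp only [hc1]
          exact (natDegree_C_mul_le _ _).trans (le_of_eq hdeg)
        · simp only [hc1]
          rw [coeff_C_mul, hco, mul_one]
      have hc2facts : ∀ K ∈ Finset.powersetCard r' s',
          (c2 K).natDegree ≤ n ∧ (c2 K).coeff n = t ^ (n - r') * TT K := by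
        intro K hK
        obtain ⟨hKs, hKc⟩ := Finset.mem_powersetCard.mp hK
        have hr'n : r' ≤ n := by omega
        have hcardsd : (s' \ K).card = n - r' := by
          rw [Finset.card_sdiff_of_subset hKs, hcard', hKc]
        have hP : (∏ k ∈ s' \ K, (C t * X - C (z k))).natDegree ≤ n - r' := by
          simpa [hcardsd] using natDegree_prod_tlin_le t z (s' \ K)
        have hQm : (∏ j ∈ K, (X - C (z j))).Monic := monic_prod_lin _ _
        have hQdeg : (∏ j ∈ K, (X - C (z j))).natDegree = r' := by
          rw [natDegree_prod_lin, hKc]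
        have hq1 : (∏ j ∈ K, (X - C (z j))).coeff r' = 1 := by
          rw [← hQdeg]; exact hQm.coeff_natDegree
        have hpc : (∏ k ∈ s' \ K, (C t * X - C (z k))).coeff (n - r') = t ^ (n - r') := by
          rw [← hcardsd]; exact coeff_prod_tlin t z (s' \ K)
        constructor
        · simp only [hc2]
          refine (natDegree_C_mul_le _ _).trans ((natDegree_mul_le).trans ?_)
          rw [hQdeg]
          omega
        · simp only [hc2]
          rw [coeff_C_mul]
          have hnn : n - r' + r' = n := by omega
          have hco : ((∏ k ∈ s' \ K, (C t * X - C (z k))) * ∏ j ∈ K, (X - C (z j))).coeff n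
              = t ^ (n - r') := by
            conv_lhs => rw [← hnn]
            rw [coeff_mul_add_eq_of_natDegree_le hP hQdeg.le, hpc, hq1, mul_one]
          rw [hco]
          ring
      have hcoeffF : F.coeff n = Gq t n (r'+1) + t ^ (n - r') * Gq t n r' := by
        rw [hF, coeff_add, finset_sum_coeff, finset_sum_coeff]
        rw [Finset.sum_congr rfl (fun J hJ => (hc1facts J hJ).2),
          Finset.sum_congr rfl (fun K hK => (hc2facts K hK).2), ← Finset.mul_sum]
        simp only [hTT]
        rw [IH s' z hcard' hinj' (r'+1) hrn2 ht,
          IH s' z hcard' hinj' r' (by omega : r' ≤ n) (fun i h1 h2 => ht i h1 (by omega))]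
      -- evaluation at the other points vanishes
      have hFb : ∀ b ∈ s', F.eval (z b) = 0 := by
        intro b hb
        rw [hF, eval_add, eval_finset_sum, eval_finset_sum]
        rw [← Finset.sum_filter_add_sum_filter_not (Finset.powersetCard (r'+1) s')
            (fun J => b ∈ J) (fun J => (c1 J).eval (z b)),
          ← Finset.sum_filter_add_sum_filter_not (Finset.powersetCard r' s')
            (fun K => b ∈ K) (fun K => (c2 K).eval (z b))]
        have hz1 : ∑ J ∈ Finset.filter (fun J => ¬ b ∈ J) (Finset.powersetCard (r'+1) s'),
            (c1 J).eval (z b) = 0 := by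
          refine Finset.sum_eq_zero fun J hJ => ?_
          rw [Finset.mem_filter] at hJ
          obtain ⟨hJm, hbJ⟩ := hJ
          simp only [hc1, eval_mul, eval_C, eval_prod, eval_sub, eval_X]
          have h0 : (∏ k ∈ s' \ J, (z b - z k)) = 0 :=
            Finset.prod_eq_zero (Finset.mem_sdiff.mpr ⟨hb, hbJ⟩) (sub_self _)
          rw [h0, mul_zero, mul_zero]
        have hz2 : ∑ K ∈ Finset.filter (fun K => b ∈ K) (Finset.powersetCard r' s'),
            (c2 K).eval (z b) = 0 := by
          refine Finset.sum_eq_zero fun K hK => ?_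
          rw [Finset.mem_filter] at hK
          obtain ⟨hKm, hbK⟩ := hK
          simp only [hc2, eval_mul, eval_C, eval_prod, eval_sub, eval_X]
          have h0 : (∏ j ∈ K, (z b - z j)) = 0 := Finset.prod_eq_zero hbK (sub_self _)
          rw [h0, mul_zero, mul_zero]
        have hre : ∑ K ∈ Finset.filter (fun K => ¬ b ∈ K) (Finset.powersetCard r' s'),
            (c2 K).eval (z b)
            = ∑ J ∈ Finset.filter (fun J => b ∈ J) (Finset.powersetCard (r'+1) s'),
              (c2 (J.erase b)).eval (z b) := by
          refine Finset.sum_nbij' (fun K => insert b K) (fun J => J.erase b)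
            ?_ ?_ ?_ ?_ ?_
          · intro K hK
            rw [Finset.mem_filter] at hK ⊢
            obtain ⟨hKm, hbK⟩ := hK
            obtain ⟨hKs, hKc⟩ := Finset.mem_powersetCard.mp hKm
            refine ⟨Finset.mem_powersetCard.mpr ⟨?_, ?_⟩, Finset.mem_insert_self b K⟩
            · exact Finset.insert_subset hb hKs
            · rw [Finset.card_insert_of_notMem hbK, hKc]
          · intro J hJ
            rw [Finset.mem_filter] at hJ ⊢
            obtain ⟨hJm, hbJ⟩ := hJ
            obtain ⟨hJs, hJc⟩ := Finset.mem_powersetCard.mp hJm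
            refine ⟨Finset.mem_powersetCard.mpr ⟨(Finset.erase_subset b J).trans hJs, ?_⟩,
              Finset.notMem_erase b J⟩
            rw [Finset.card_erase_of_mem hbJ, hJc]
            omega
          · intro K hK
            rw [Finset.mem_filter] at hK
            exact Finset.erase_insert hK.2
          · intro J hJ
            rw [Finset.mem_filter] at hJ
            exact Finset.insert_erase hJ.2
          · intro K hK
            rw [Finset.mem_filter] at hK
            rw [Finset.erase_insert hK.2]
        rw [hz1, hz2, hre, add_zero, zero_add, ← Finset.sum_add_distrib]
        refine Finset.sum_eq_zero fun J hJ => ?_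
        rw [Finset.mem_filter] at hJ
        obtain ⟨hJm, hbJ⟩ := hJ
        obtain ⟨hJs, hJc⟩ := Finset.mem_powersetCard.mp hJm
        have hbA : b ∉ J.erase b := Finset.notMem_erase b J
        have hJA : insert b (J.erase b) = J := Finset.insert_erase hbJ
        have hbB : b ∉ s' \ J := fun h => (Finset.mem_sdiff.mp h).2 hbJ
        have hsA : s' \ (J.erase b) = insert b (s' \ J) := by
          ext x
          simp only [Finset.mem_sdiff, Finset.mem_erase, Finset.mem_insert]
          by_cases hxb : x = b
          · subst hxb; simp [hb, hbJ]
          · simp [hxb]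
        have hzbk : ∀ k ∈ s' \ J, z b - z k ≠ 0 := by
          intro k hk
          obtain ⟨hks', hkJ⟩ := Finset.mem_sdiff.mp hk
          exact sub_ne_zero.mpr fun h =>
            hkJ ((hinj' (by simpa using hb) (by simpa using hks') h) ▸ hbJ)
        have hzbj : ∀ j ∈ J.erase b, z j - z b ≠ 0 := by
          intro j hj
          obtain ⟨hjb, hjJ⟩ := Finset.mem_erase.mp hj
          exact sub_ne_zero.mpr fun h =>
            hjb (hinj' (by simpa using hJs hjJ) (by simpa using hb) h)
        have hTTJ : TT J = (∏ k ∈ s' \ J, (t * z b - z k) / (z b - z k)) *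
            ∏ j ∈ J.erase b, ∏ k ∈ s' \ J, (t * z j - z k) / (z j - z k) := by
          simp only [hTT]
          conv_lhs => rw [← hJA, Finset.prod_insert hbA, hJA]
        have hTTA : TT (J.erase b) = (∏ j ∈ J.erase b, (t * z j - z b) / (z j - z b)) *
            ∏ j ∈ J.erase b, ∏ k ∈ s' \ J, (t * z j - z k) / (z j - z k) := by
          simp only [hTT]
          rw [hsA]
          simp only [Finset.prod_insert hbB]
          rw [Finset.prod_mul_distrib]
        have hprodB : (∏ k ∈ s' \ J, (t * z b - z k) / (z b - z k)) *
            (∏ k ∈ s' \ J, (z b - z k)) = ∏ k ∈ s' \ J, (t * z b - z k) := by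
          rw [← Finset.prod_mul_distrib]
          exact Finset.prod_congr rfl fun k hk => div_mul_cancel₀ _ (hzbk k hk)
        have hprodA : (∏ j ∈ J.erase b, (t * z j - z b) / (z j - z b)) *
            (∏ j ∈ J.erase b, (z b - z j)) = ∏ j ∈ J.erase b, (z b - t * z j) := by
          rw [← Finset.prod_mul_distrib]
          refine Finset.prod_congr rfl fun j hj => ?_
          have h1 := hzbj j hj
          field_simp
          ring
        have hprodJ : ∏ j ∈ J, (z b - t * z j)
            = (z b - t * z b) * ∏ j ∈ J.erase b, (z b - t * z j) := by
          conv_lhs => rw [← hJA, Finset.prod_insert hbA]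
        have hprodsA : ∏ k ∈ s' \ (J.erase b), (t * z b - z k)
            = (t * z b - z b) * ∏ k ∈ s' \ J, (t * z b - z k) := by
          rw [hsA, Finset.prod_insert hbB]
        have h1 : (c1 J).eval (z b) = ((z b - t * z b) * ∏ k ∈ s' \ J, (t * z b - z k)) *
            ((∏ j ∈ J.erase b, (z b - t * z j)) *
              ∏ j ∈ J.erase b, ∏ k ∈ s' \ J, (t * z j - z k) / (z j - z k)) := by
          simp only [hc1, eval_mul, eval_C, eval_prod, eval_sub, eval_X]
          rw [hTTJ, hprodJ, ← hprodB]
          ring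
        have h2 : (c2 (J.erase b)).eval (z b)
            = ((t * z b - z b) * ∏ k ∈ s' \ J, (t * z b - z k)) *
            ((∏ j ∈ J.erase b, (z b - t * z j)) *
              ∏ j ∈ J.erase b, ∏ k ∈ s' \ J, (t * z j - z k) / (z j - z k)) := by
          simp only [hc2, eval_mul, eval_C, eval_prod, eval_sub, eval_X]
          rw [hTTA, hprodsA, ← hprodA]
          ring
        rw [h1, h2]
        ring
      -- put everything together
      have hFdeg : F.natDegree ≤ n := by
        rw [hF]
        refine (natDegree_add_le _ _).trans (max_le ?_ ?_)
        · exact natDegree_sum_le_of_forall_le _ _ fun J hJ => (hc1facts J hJ).1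
        · exact natDegree_sum_le_of_forall_le _ _ fun K hK => (hc2facts K hK).1
      set cV : ℂ := Gq t n (r'+1) + t ^ (n - r') * Gq t n r' with hcV
      have hDdeg : D.natDegree = n := by rw [hD, natDegree_prod_lin, hcard']
      have hDmonic : D.Monic := monic_prod_lin _ _
      have hGzero : F - C cV * D = 0 := by
        by_contra hne
        have hdegle : (F - C cV * D).natDegree ≤ n := by
          refine (natDegree_sub_le _ _).trans (max_le hFdeg ?_)
          exact (natDegree_mul_le).trans (by simp [natDegree_C, hDdeg])
        have hcoeffzero : (F - C cV * D).coeff n = 0 := by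
          rw [coeff_sub, hcoeffF, coeff_C_mul]
          have hD1 : D.coeff n = 1 := by rw [← hDdeg]; exact hDmonic.coeff_natDegree
          rw [hD1, hcV]
          ring
        have hdeglt : (F - C cV * D).natDegree < n := by
          rcases lt_or_eq_of_le hdegle with h | h
          · exact h
          · exact absurd (leadingCoeff_eq_zero.mp (by rw [leadingCoeff, h]; exact hcoeffzero)) hne
        have him : ((s'.image z)).card = n := by
          rw [Finset.card_image_of_injOn hinj', hcard']
        refine hne (Polynomial.eq_zero_of_natDegree_lt_card_of_eval_eq_zero' (F - C cV * D)
          (s'.image z) ?_ (by rw [him]; exact hdeglt))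
        intro x hx
        obtain ⟨b, hb, rfl⟩ := Finset.mem_image.mp hx
        rw [eval_sub, hFb b hb, eval_mul, eval_C]
        have hDb : D.eval (z b) = 0 := by
          rw [hD]
          simp only [eval_prod, eval_sub, eval_X, eval_C]
          exact Finset.prod_eq_zero hb (sub_self _)
        rw [hDb]
        ring
      have hFD : F = C cV * D := sub_eq_zero.mp hGzero
      have hDw : D.eval w ≠ 0 := by
        rw [hD]
        simp only [eval_prod, eval_sub, eval_X, eval_C]
        exact Finset.prod_ne_zero_iff.mpr fun k hk => hwk k hk
      have hmain : ∑ J ∈ Finset.powersetCard (r'+1) s,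
          ∏ j ∈ J, ∏ k ∈ s \ J, (t * z j - z k) / (z j - z k) = cV :=
        mul_right_cancel₀ hDw (by rw [hS, hFD, eval_mul, eval_C])
      rw [hmain, hcV]
      have hp := gq_pascal t (show 1 ≤ r' + 1 by omega) hrn2 (ht (r'+1) (by omega) le_rfl)
      simp only [Nat.add_sub_cancel] at hp
      rw [show n + 1 - (r'+1) = n - r' from by omega] at hp
      linear_combination hp


end Stmt19

namespace Stmt19

/-- For pairwise distinct `z_1, …, z_N` and `t^i ≠ 1` for `1 ≤ i ≤ r ≤ N`:
`Σ_{#J = r} ∏_{j∈J}∏_{k∉J} (t·z_j − z_k)/(z_j − z_k) = ∏_{i=1}^{r} (t^{N−r+i} − 1)/(t^i − 1)`;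
in particular the left-hand side is independent of the `z_j` and equals the Gaussian binomial
coefficient. -/
theorem sum_AJ_eq_gaussian_binomial (N r : ℕ) (hr : r ≤ N) (t : ℂ)
    (ht : ∀ i, 1 ≤ i → i ≤ r → t ^ i ≠ 1)
    (z : Fin N → ℂ) (hz : Function.Injective z) :
    ∑ J ∈ Finset.powersetCard r (Finset.univ : Finset (Fin N)),
        ∏ j ∈ J, ∏ k ∈ Jᶜ, (t * z j - z k) / (z j - z k)
      = ∏ i ∈ Finset.Icc 1 r, (t ^ (N - r + i) - 1) / (t ^ i - 1) := by
  have h := aux t N (Finset.univ : Finset (Fin N)) z (by simp) hz.injOn r hr ht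
  rw [show (∏ i ∈ Finset.Icc 1 r, (t ^ (N - r + i) - 1) / (t ^ i - 1)) = Gq t N r from rfl, ← h]
  refine Finset.sum_congr rfl fun J hJ => Finset.prod_congr rfl fun j hj => ?_
  rw [Finset.compl_eq_univ_sdiff]

end Stmt19
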